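/- arXiv:2312.16657 — 3 statements merged into one kernel-verified Lean document; each statement's English description precedes it below -/
import Mathlib

section
/- For every natural number n ≥ 2, ∑_{l=1}^{n-1} csc(πl/n) = −(2n·log n)/π − (2(γ + log 2)(n−1))/π − (2/π)·∑_{l=1}^{n-1} Ψ(l/(2n)). -/
open Real Finset

/-- The digamma function: the logarithmic derivative of the Gamma function. -/
noncomputable def digamma (x : ℝ) : ℝ := deriv (fun y => Real.log (Real.Gamma y)) x

lemma hasDerivAt_logGamma {x : ℝ} (hx : 0 < x) :
    HasDerivAt (fun y => Real.log (Real.Gamma y)) (digamma x) x := by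
  have hd : DifferentiableAt ℝ Real.Gamma x := by
    refine Real.differentiableAt_Gamma fun m => ?_
    have : (0:ℝ) ≤ m := Nat.cast_nonneg m
    intro h; rw [h] at hx; linarith
  have h2 : HasDerivAt (fun y => Real.log (Real.Gamma y)) (deriv Real.Gamma x / Real.Gamma x) x :=
    hd.hasDerivAt.log (Real.Gamma_pos_of_pos hx).ne'
  have : digamma x = deriv Real.Gamma x / Real.Gamma x := h2.deriv
  rw [this]; exact h2

lemma digamma_one : digamma 1 = -Real.eulerMascheroniConstant := by
  have h := Real.hasDerivAt_Gamma_one.log (by rw [Real.Gamma_one]; norm_num)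
  rw [Real.Gamma_one, div_one] at h
  exact h.deriv


lemma digamma_reflection {x : ℝ} (h0 : 0 < x) (h1 : x < 1) :
    digamma x - digamma (1 - x) = -(π * Real.cos (π * x) / Real.sin (π * x)) := by
  have hsin : 0 < Real.sin (π * x) := Real.sin_pos_of_pos_of_lt_pi (by positivity)
    (by nlinarith [Real.pi_pos])
  have inner : HasDerivAt (fun y : ℝ => 1 - y) (-1) x := by
    simpa using (hasDerivAt_id x).const_sub 1
  have t2 : HasDerivAt (fun y : ℝ => Real.log (Real.Gamma (1 - y)))
      (digamma (1 - x) * (-1)) x := by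
    exact (hasDerivAt_logGamma (by linarith)).comp x inner
  have hg : HasDerivAt (fun y : ℝ => Real.log (Real.Gamma y) + Real.log (Real.Gamma (1 - y)))
      (digamma x + digamma (1 - x) * (-1)) x := (hasDerivAt_logGamma h0).add t2
  have hsd : HasDerivAt (fun y : ℝ => Real.sin (π * y)) (Real.cos (π * x) * π) x :=
    (Real.hasDerivAt_sin (π * x)).comp x (by simpa using (hasDerivAt_id x).const_mul π)
  have hh : HasDerivAt (fun y : ℝ => Real.log π - Real.log (Real.sin (π * y)))
      (-(Real.cos (π * x) * π / Real.sin (π * x))) x := by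
    simpa using (hsd.log hsin.ne').const_sub (Real.log π)
  have heq : (fun y : ℝ => Real.log (Real.Gamma y) + Real.log (Real.Gamma (1 - y))) =ᶠ[nhds x]
      (fun y : ℝ => Real.log π - Real.log (Real.sin (π * y))) := by
    filter_upwards [Ioo_mem_nhds h0 h1] with y hy
    have hy0 : (0:ℝ) < y := hy.1
    have hy1 : y < 1 := hy.2
    have hs : 0 < Real.sin (π * y) := Real.sin_pos_of_pos_of_lt_pi (by positivity)
      (by nlinarith [Real.pi_pos])
    rw [← Real.log_mul (Real.Gamma_pos_of_pos hy0).ne'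
      (Real.Gamma_pos_of_pos (by linarith : (0:ℝ) < 1 - y)).ne',
      Real.Gamma_mul_Gamma_one_sub, Real.log_div Real.pi_ne_zero hs.ne']
  have := hg.unique (hh.congr_of_eventuallyEq heq)
  rw [mul_comm (Real.cos (π*x)) π] at this
  linarith [this]

lemma digamma_duplication {x : ℝ} (hx : 0 < x) :
    digamma x + digamma (x + 1/2) = 2 * digamma (2 * x) - 2 * Real.log 2 := by
  have t2 : HasDerivAt (fun y : ℝ => Real.log (Real.Gamma (y + 1/2)))
      (digamma (x + 1/2) * 1) x :=
    (hasDerivAt_logGamma (by linarith)).comp x (by simpa using (hasDerivAt_id x).add_const (1/2:ℝ))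
  have hg : HasDerivAt
      (fun y : ℝ => Real.log (Real.Gamma y) + Real.log (Real.Gamma (y + 1/2)))
      (digamma x + digamma (x + 1/2) * 1) x := (hasDerivAt_logGamma hx).add t2
  have t3 : HasDerivAt (fun y : ℝ => Real.log (Real.Gamma (2 * y)))
      (digamma (2 * x) * 2) x :=
    (hasDerivAt_logGamma (by linarith)).comp x (by simpa using (hasDerivAt_id x).const_mul (2:ℝ))
  have t4 : HasDerivAt (fun y : ℝ => (1 - 2 * y) * Real.log 2) (-2 * Real.log 2) x := by
    have : HasDerivAt (fun y : ℝ => 1 - 2 * y) (-2) x := by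
      simpa using ((hasDerivAt_id x).const_mul (2:ℝ)).const_sub 1
    simpa using this.mul_const (Real.log 2)
  have hh : HasDerivAt
      (fun y : ℝ => Real.log (Real.Gamma (2 * y)) + ((1 - 2 * y) * Real.log 2 + Real.log (Real.sqrt π)))
      (digamma (2 * x) * 2 + (-2 * Real.log 2 + 0)) x :=
    t3.add (t4.add (hasDerivAt_const x _))
  have heq : (fun y : ℝ => Real.log (Real.Gamma y) + Real.log (Real.Gamma (y + 1/2))) =ᶠ[nhds x]
      (fun y : ℝ => Real.log (Real.Gamma (2 * y)) + ((1 - 2 * y) * Real.log 2 + Real.log (Real.sqrt π))) := by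
    filter_upwards [Ioi_mem_nhds hx] with y hy
    have hy0 : (0:ℝ) < y := hy
    rw [← Real.log_mul (Real.Gamma_pos_of_pos hy0).ne'
      (Real.Gamma_pos_of_pos (by linarith : (0:ℝ) < y + 1/2)).ne',
      Real.Gamma_mul_Gamma_add_half, Real.log_mul (by positivity) (Real.sqrt_pos.mpr Real.pi_pos).ne',
      Real.log_mul (Real.Gamma_pos_of_pos (by linarith : (0:ℝ) < 2*y)).ne' (by positivity),
      Real.log_rpow (by norm_num : (0:ℝ) < 2)]
    ring
  have := hg.unique (hh.congr_of_eventuallyEq heq)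
  rw [mul_one] at this
  linarith [this]

lemma convexOn_finset_sum {α : Type*} (s : Finset α) {t : Set ℝ} (ht : Convex ℝ t)
    {f : α → ℝ → ℝ} (hf : ∀ i ∈ s, ConvexOn ℝ t (f i)) :
    ConvexOn ℝ t (fun x => ∑ i ∈ s, f i x) := by
  classical
  induction s using Finset.induction_on with
  | empty => simpa using convexOn_const 0 ht
  | @insert a s' hx ih =>
    simp only [Finset.sum_insert hx]
    exact (hf a (Finset.mem_insert_self a s')).add
      (ih fun i hi => hf i (Finset.mem_insert_of_mem hi))

lemma gauss_digamma_sum (m : ℕ) (hm : 1 ≤ m) :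
    ∑ l ∈ Finset.range m, digamma ((1 + l) / m) =
      -(m : ℝ) * Real.eulerMascheroniConstant - m * Real.log m := by
  set M : ℝ := (m : ℝ) with hMdef
  have hM : (0:ℝ) < M := by rw [hMdef]; exact_mod_cast (by omega : 0 < m)
  set C : ℝ := ∏ l ∈ Finset.range m, Real.Gamma ((1 + l) / M) with hCdef
  have hprod_pos : ∀ y : ℝ, 0 < y → 0 < ∏ l ∈ Finset.range m, Real.Gamma ((y + l) / M) := by
    intro y hy
    exact Finset.prod_pos fun l _ => Real.Gamma_pos_of_pos (by positivity)
  have hC : 0 < C := by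
    rw [hCdef]; exact Finset.prod_pos fun l _ => Real.Gamma_pos_of_pos (by positivity)
  set f : ℝ → ℝ := fun x => M ^ (x - 1) * (∏ l ∈ Finset.range m, Real.Gamma ((x + l) / M)) / C
    with hfdef
  have hf_pos : ∀ {y : ℝ}, 0 < y → 0 < f y := by
    intro y hy
    have := hprod_pos y hy
    rw [hfdef]
    positivity
  have hf_one : f 1 = 1 := by
    rw [hfdef]
    simp only [sub_self, Real.rpow_zero, one_mul]
    rw [← hCdef]
    exact div_self hC.ne'
  have hf_feq : ∀ {y : ℝ}, 0 < y → f (y + 1) = y * f y := by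
    intro y hy
    set g : ℕ → ℝ := fun l => Real.Gamma ((y + l) / M) with hgdef
    have hg0pos : 0 < g 0 := Real.Gamma_pos_of_pos (by simp [hgdef]; positivity)
    have e1 : ∏ l ∈ Finset.range m, Real.Gamma ((y + 1 + l) / M) =
        ∏ l ∈ Finset.range m, g (l + 1) := by
      refine Finset.prod_congr rfl fun l _ => ?_
      rw [hgdef]
      norm_num
      ring_nf
    have e2 : (∏ l ∈ Finset.range m, g (l + 1)) * g 0 =
        (∏ l ∈ Finset.range m, g l) * g m := by
      rw [← Finset.prod_range_succ' g m, Finset.prod_range_succ]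
    have e3 : g m = (y / M) * g 0 := by
      have harg : (y + (m:ℝ)) / M = y / M + 1 := by field_simp [hMdef]; rw [hMdef]
      have h0 : g 0 = Real.Gamma (y / M) := by simp [hgdef]
      rw [hgdef]
      simp only
      rw [harg, Real.Gamma_add_one (by positivity : y / M ≠ 0)]
      norm_num
    have key : ∏ l ∈ Finset.range m, Real.Gamma ((y + 1 + l) / M) =
        (y / M) * ∏ l ∈ Finset.range m, g l := by
      rw [e1]
      have := e2
      rw [e3] at this
      have := mul_right_cancel₀ hg0pos.ne' (by linarith [this] : (∏ l ∈ Finset.range m, g (l + 1)) * g 0 = ((y / M) * ∏ l ∈ Finset.range m, g l) * g 0)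
      exact this
    rw [hfdef]
    simp only
    rw [key]
    have hr : M ^ (y + 1 - 1) = M ^ (y - 1) * M := by
      rw [show y + 1 - 1 = (y - 1) + 1 by ring, Real.rpow_add hM, Real.rpow_one]
    rw [hr, hgdef]
    field_simp
  -- the log of f, as an explicit convex function
  set F : ℝ → ℝ := fun x => (x - 1) * Real.log M +
      (∑ l ∈ Finset.range m, Real.log (Real.Gamma ((x + l) / M))) - Real.log C with hFdef
  have hlogf : ∀ x : ℝ, 0 < x → Real.log (f x) = F x := by
    intro x hx
    have hpos1 : (0:ℝ) < M ^ (x-1) := Real.rpow_pos_of_pos hM _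
    have hpos2 := hprod_pos x hx
    rw [hfdef]
    simp only
    rw [Real.log_div (mul_pos hpos1 hpos2).ne' hC.ne', Real.log_mul hpos1.ne' hpos2.ne',
      Real.log_prod (s := Finset.range m) (f := fun l : ℕ => Real.Gamma ((x + l) / M))
        (fun l _ => (Real.Gamma_pos_of_pos (div_pos (by positivity) hM)).ne'),
      Real.log_rpow hM]
  have hF_conv : ConvexOn ℝ (Set.Ioi 0) F := by
    have h1 : ConvexOn ℝ (Set.Ioi (0:ℝ)) (fun x : ℝ =>
        ∑ l ∈ Finset.range m, Real.log (Real.Gamma ((x + l) / M))) := by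
      refine convexOn_finset_sum _ (convex_Ioi 0) fun l _ => ?_
      refine ⟨convex_Ioi 0, fun a ha b hb p q hp hq hpq => ?_⟩
      have hq' : q = 1 - p := by linarith
      subst hq'
      have ha' : (0:ℝ) < (a + l) / M := by
        have : (0:ℝ) < a := ha; positivity
      have hb' : (0:ℝ) < (b + l) / M := by
        have : (0:ℝ) < b := hb; positivity
      have := Real.convexOn_log_Gamma.2 (Set.mem_Ioi.mpr ha') (Set.mem_Ioi.mpr hb') hp hq hpq
      simp only [Function.comp, smul_eq_mul] at this ⊢
      have harg : (p * a + (1 - p) * b + l) / M = p * ((a + l) / M) + (1 - p) * ((b + l) / M) := by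
        field_simp; ring
      rw [harg]
      exact this
    have h2 : ConvexOn ℝ (Set.Ioi (0:ℝ)) (fun x : ℝ => (x - 1) * Real.log M - Real.log C) := by
      refine ⟨convex_Ioi 0, fun a _ b _ p q hp hq hpq => ?_⟩
      have hq' : q = 1 - p := by linarith
      subst hq'
      simp only [smul_eq_mul]
      exact le_of_eq (by ring)
    have := h1.add h2
    refine this.congr fun x _ => ?_
    simp only [hFdef, Pi.add_apply]; ring
  have hf_conv : ConvexOn ℝ (Set.Ioi 0) (Real.log ∘ f) := by
    refine hF_conv.congr fun x hx => ?_
    exact (hlogf x (Set.mem_Ioi.mp hx)).symm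
  have hfΓ : Set.EqOn f Real.Gamma (Set.Ioi 0) :=
    Real.eq_Gamma_of_log_convex hf_conv hf_feq hf_pos hf_one
  -- differentiate log Gamma = F at 1
  have hFderiv : HasDerivAt F (Real.log M + ∑ l ∈ Finset.range m,
      digamma ((1 + l) / M) * (1 / M)) 1 := by
    have hsum : HasDerivAt (fun x : ℝ => ∑ l ∈ Finset.range m, Real.log (Real.Gamma ((x + l) / M)))
        (∑ l ∈ Finset.range m, digamma ((1 + l) / M) * (1 / M)) 1 := by
      refine HasDerivAt.fun_sum fun l _ => ?_
      have hinner : HasDerivAt (fun x : ℝ => (x + l) / M) (1 / M) 1 := by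
        simpa using ((hasDerivAt_id (1:ℝ)).add_const (l:ℝ)).div_const M
      exact (hasDerivAt_logGamma (by positivity : (0:ℝ) < (1 + l) / M)).comp 1 hinner
    have haff : HasDerivAt (fun x : ℝ => (x - 1) * Real.log M) (Real.log M) 1 := by
      simpa using ((hasDerivAt_id (1:ℝ)).sub_const 1).mul_const (Real.log M)
    have := (haff.add hsum).sub_const (Real.log C)
    refine this.congr_deriv ?_ |>.congr_of_eventuallyEq ?_
    · ring
    · filter_upwards with x
      simp only [hFdef, Pi.add_apply]
  have hlogΓ : HasDerivAt (fun x : ℝ => Real.log (Real.Gamma x))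
      (Real.log M + ∑ l ∈ Finset.range m, digamma ((1 + l) / M) * (1 / M)) 1 := by
    refine hFderiv.congr_of_eventuallyEq ?_
    filter_upwards [Ioi_mem_nhds (by norm_num : (0:ℝ) < 1)] with x hx
    rw [← hfΓ hx, hlogf x hx]
  have huniq := (hasDerivAt_logGamma (by norm_num : (0:ℝ) < 1)).unique hlogΓ
  rw [digamma_one] at huniq
  have hsum_eq : ∑ l ∈ Finset.range m, digamma ((1 + l) / M) * (1 / M) =
      (∑ l ∈ Finset.range m, digamma ((1 + l) / M)) * (1 / M) := by
    rw [Finset.sum_mul]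
  rw [hsum_eq] at huniq
  have : (∑ l ∈ Finset.range m, digamma ((1 + l) / M)) =
      (-Real.eulerMascheroniConstant - Real.log M) * M := by
    field_simp at huniq ⊢
    linarith
  rw [hMdef] at this
  rw [this]
  ring

lemma cot_half_sub_cot {t : ℝ} (ht0 : 0 < t) (ht1 : t < π / 2) :
    Real.cos t / Real.sin t - Real.cos (2 * t) / Real.sin (2 * t) = 1 / Real.sin (2 * t) := by
  have hs : 0 < Real.sin t := Real.sin_pos_of_pos_of_lt_pi ht0 (by linarith [Real.pi_pos])
  have hs2 : 0 < Real.sin (2 * t) := Real.sin_pos_of_pos_of_lt_pi (by linarith) (by linarith)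
  have hc : 0 < Real.cos t := Real.cos_pos_of_mem_Ioo ⟨by linarith, ht1⟩
  have hpy := Real.sin_sq_add_cos_sq t
  rw [Real.sin_two_mul, Real.cos_two_mul]
  rw [div_sub_div _ _ hs.ne' (by positivity), div_eq_div_iff (by positivity) (by positivity)]
  ring_nf

lemma key_csc {x : ℝ} (h0 : 0 < x) (h1 : x < 1) :
    π * (Real.sin (π * x))⁻¹ =
      digamma (1 - x) + digamma x - 2 * Real.log 2 -
        digamma ((1 - x) / 2) - digamma (x / 2) := by
  have hpi := Real.pi_pos
  have hs2 : 0 < Real.sin (π * x) :=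
    Real.sin_pos_of_pos_of_lt_pi (by positivity) (by nlinarith)
  have hr1 := digamma_reflection h0 h1
  have hr2 := digamma_reflection (by positivity : 0 < x / 2) (by linarith : x / 2 < 1)
  have hdup := digamma_duplication (by linarith : 0 < (1 - x) / 2)
  have harg : (1 - x) / 2 + 1 / 2 = 1 - x / 2 := by ring
  rw [harg] at hdup
  have harg2 : 2 * ((1 - x) / 2) = 1 - x := by ring
  rw [harg2] at hdup
  have htrig := cot_half_sub_cot (t := π * x / 2) (by positivity) (by nlinarith)
  have h2t : 2 * (π * x / 2) = π * x := by ring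
  rw [h2t] at htrig
  have harg3 : π * (x / 2) = π * x / 2 := by ring
  rw [harg3] at hr2
  -- π csc = π cot(πx/2) - π cot(πx) = (ψ(1-x/2) - ψ(x/2)) - (ψ(1-x) - ψ(x))
  have hcsc : π * (Real.sin (π * x))⁻¹ =
      (digamma (1 - x / 2) - digamma (x / 2)) - (digamma (1 - x) - digamma x) := by
    have e1 : digamma (1 - x / 2) - digamma (x / 2) =
        π * (Real.cos (π * x / 2) / Real.sin (π * x / 2)) := by
      rw [← mul_div_assoc]
      linarith [hr2]
    have e2 : digamma (1 - x) - digamma x = π * (Real.cos (π * x) / Real.sin (π * x)) := by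
      rw [← mul_div_assoc]
      linarith [hr1]
    rw [e1, e2, ← mul_sub, htrig, one_div]
  rw [hcsc]
  linarith [hdup]

lemma sum_Ico_reflect_real (F : ℕ → ℝ) (n : ℕ) :
    ∑ l ∈ Finset.Ico 1 n, F (n - l) = ∑ l ∈ Finset.Ico 1 n, F l := by
  refine Finset.sum_nbij' (fun l => n - l) (fun l => n - l) ?_ ?_ ?_ ?_ ?_ <;>
    intro a ha <;> simp only [Finset.mem_Ico] at ha ⊢ <;> first | omega | rfl

theorem csc_sum_digamma_log (n : ℕ) (hn : 2 ≤ n) :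
    ∑ l ∈ Finset.Ico 1 n, (Real.sin (π * l / n))⁻¹ =
      -(2 * n * Real.log n) / π -
        (2 * (Real.eulerMascheroniConstant + Real.log 2) * ((n : ℝ) - 1)) / π -
        (2 / π) * ∑ l ∈ Finset.Ico 1 n, digamma (l / (2 * n)) := by
  have hpi := Real.pi_pos
  have hn0 : (0:ℝ) < n := by exact_mod_cast (by omega : 0 < n)
  set S := ∑ l ∈ Finset.Ico 1 n, digamma ((l:ℝ) / n) with hSdef
  set T := ∑ l ∈ Finset.Ico 1 n, digamma ((l:ℝ) / (2 * n)) with hTdef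
  have hstep : ∀ l ∈ Finset.Ico 1 n, π * (Real.sin (π * l / n))⁻¹ =
      digamma (((n - l : ℕ):ℝ) / n) + digamma ((l:ℝ) / n) - 2 * Real.log 2 -
      digamma (((n - l : ℕ):ℝ) / (2 * n)) - digamma ((l:ℝ) / (2 * n)) := by
    intro l hl
    rw [Finset.mem_Ico] at hl
    have hln : (l:ℝ) < n := by exact_mod_cast hl.2
    have hl1 : (0:ℝ) < l := by exact_mod_cast (by omega : 0 < l)
    have hx0 : 0 < (l:ℝ)/n := by positivity
    have hx1 : (l:ℝ)/n < 1 := (div_lt_one hn0).mpr hln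
    have hc : ((n - l : ℕ):ℝ) = (n:ℝ) - l := by
      rw [Nat.cast_sub hl.2.le]
    rw [hc]
    have e1 : ((n:ℝ) - l)/(n:ℝ) = 1 - (l:ℝ)/n := by field_simp
    have e2 : ((n:ℝ) - l)/(2*(n:ℝ)) = (1 - (l:ℝ)/n)/2 := by
      rw [← e1, div_div, mul_comm (n:ℝ) 2]
    have e3 : (l:ℝ)/(2*(n:ℝ)) = ((l:ℝ)/n)/2 := by ring
    have e4 : π * (l:ℝ) / n = π * ((l:ℝ)/n) := by ring
    rw [e1, e2, e3, e4]
    exact key_csc hx0 hx1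
  have hrefl1 : ∑ l ∈ Finset.Ico 1 n, digamma (((n - l : ℕ):ℝ) / n) = S :=
    sum_Ico_reflect_real (fun k => digamma ((k:ℝ)/n)) n
  have hrefl2 : ∑ l ∈ Finset.Ico 1 n, digamma (((n - l : ℕ):ℝ) / (2*n)) = T :=
    sum_Ico_reflect_real (fun k => digamma ((k:ℝ)/(2*n))) n
  have hcard : (Finset.Ico 1 n).card = n - 1 := Nat.card_Ico 1 n
  have hmain : π * ∑ l ∈ Finset.Ico 1 n, (Real.sin (π * l / n))⁻¹ =
      2*S - 2*((n:ℝ)-1)*Real.log 2 - 2*T := by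
    rw [Finset.mul_sum, Finset.sum_congr rfl hstep]
    rw [Finset.sum_sub_distrib, Finset.sum_sub_distrib, Finset.sum_sub_distrib,
      Finset.sum_add_distrib, Finset.sum_const, hrefl1, hrefl2, hcard, nsmul_eq_mul,
      Nat.cast_sub (by omega : 1 ≤ n), Nat.cast_one]
    ring
  have hgauss := gauss_digamma_sum n (by omega)
  have hSval : S = -((n:ℝ) - 1) * Real.eulerMascheroniConstant - (n:ℝ) * Real.log n := by
    have h2 : ∑ k ∈ Finset.Ico 1 (n+1), digamma ((k:ℝ)/n) =
        ∑ l ∈ Finset.range n, digamma ((1 + (l:ℕ)) / (n:ℝ)) := by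
      rw [Finset.sum_Ico_eq_sum_range]
      simp only [Nat.add_sub_cancel]
      refine Finset.sum_congr rfl fun l _ => ?_
      congr 1
      push_cast
      ring
    have h3 : ∑ k ∈ Finset.Ico 1 (n+1), digamma ((k:ℝ)/n) = S + digamma ((n:ℝ)/n) := by
      rw [Finset.sum_Ico_succ_top (by omega : 1 ≤ n)]
    have h4 : (n:ℝ)/(n:ℝ) = 1 := div_self hn0.ne'
    rw [h4, digamma_one, h2, hgauss] at h3
    linarith
  have hπ : π ≠ 0 := Real.pi_ne_zero
  calc ∑ l ∈ Finset.Ico 1 n, (Real.sin (π * l / n))⁻¹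
      = (π * ∑ l ∈ Finset.Ico 1 n, (Real.sin (π * l / n))⁻¹) / π := by
        field_simp
    _ = (2*S - 2*((n:ℝ)-1)*Real.log 2 - 2*T)/π := by rw [hmain]
    _ = -(2 * n * Real.log n) / π -
        (2 * (Real.eulerMascheroniConstant + Real.log 2) * ((n : ℝ) - 1)) / π -
        (2 / π) * T := by rw [hSval]; ring
end

section
/- For every natural number n ≥ 2, ∑_{l=1}^{n-1} csc(πl/n) = (2n/π)·∫_0^∞ (tanh(n x)/tanh(x) − 1) dx, where the improper integral converges. -/
open Real Finset MeasureTheory Set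


lemma mellinA_integrable {a : ℝ} (h0 : 0 < a) (h1 : a < 1) :
    IntegrableOn (fun t : ℝ => t ^ (a - 1) / (1 + t)) (Set.Ioi 0) := by
  have hmeas : AEStronglyMeasurable (fun t : ℝ => t ^ (a - 1) / (1 + t))
      (volume.restrict (Set.Ioi (0:ℝ))) := by
    apply Measurable.aestronglyMeasurable
    fun_prop
  have hIoc : IntegrableOn (fun t : ℝ => t ^ (a - 1) / (1 + t)) (Set.Ioc 0 1) := by
    have hbase : IntegrableOn (fun t : ℝ => t ^ (a - 1)) (Set.Ioc (0:ℝ) 1) := by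
      have := intervalIntegral.intervalIntegrable_rpow' (a := 0) (b := 1) (r := a - 1)
        (by linarith)
      rwa [intervalIntegrable_iff_integrableOn_Ioc_of_le zero_le_one] at this
    refine hbase.mono' (hmeas.mono_set Ioc_subset_Ioi_self) ?_
    filter_upwards [ae_restrict_mem measurableSet_Ioc] with t ht
    have ht0 : (0:ℝ) < t := ht.1
    have hd : (1:ℝ) ≤ 1 + t := by linarith
    rw [Real.norm_eq_abs, abs_of_nonneg (by positivity)]
    calc t ^ (a - 1) / (1 + t) ≤ t ^ (a - 1) / 1 := by gcongr
    _ = t ^ (a - 1) := by ring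
  have hIoi : IntegrableOn (fun t : ℝ => t ^ (a - 1) / (1 + t)) (Set.Ioi 1) := by
    have hbase : IntegrableOn (fun t : ℝ => t ^ (a - 2)) (Set.Ioi (1:ℝ)) :=
      integrableOn_Ioi_rpow_of_lt (by linarith) one_pos
    refine hbase.mono' (hmeas.mono_set (Ioi_subset_Ioi zero_le_one)) ?_
    filter_upwards [ae_restrict_mem measurableSet_Ioi] with t ht
    have ht0 : (0:ℝ) < t := lt_trans one_pos ht
    rw [Real.norm_eq_abs, abs_of_nonneg (by positivity)]
    calc t ^ (a - 1) / (1 + t) ≤ t ^ (a - 1) / t := by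
          have hnum : (0:ℝ) ≤ t ^ (a-1) := by positivity
          gcongr <;> linarith
    _ = t ^ (a - 2) := by
          rw [div_eq_iff (ne_of_gt ht0), ← Real.rpow_add_one (ne_of_gt ht0)]
          congr 1
          ring
  have := hIoc.union hIoi
  rwa [Set.Ioc_union_Ioi_eq_Ioi zero_le_one] at this

lemma mellinA_eq {a : ℝ} (h0 : 0 < a) (h1 : a < 1) :
    ∫ t in Set.Ioi (0:ℝ), t ^ (a - 1) / (1 + t) = π / Real.sin (π * a) := by
  set ν := volume.restrict (Set.Ioi (0:ℝ)) with hν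
  set F : ℝ × ℝ → ℝ := fun p => p.1 ^ (a - 1) * Real.exp (-(1 + p.1) * p.2) with hF
  have hFmeas : AEStronglyMeasurable F (ν.prod ν) := by
    apply Measurable.aestronglyMeasurable
    fun_prop
  -- slice integral in u for fixed t > 0
  have hslice : ∀ t : ℝ, 0 < t → Integrable (fun u => F (t, u)) ν := by
    intro t ht
    have : IntegrableOn (fun u : ℝ => Real.exp (-(1 + t) * u)) (Set.Ioi 0) :=
      exp_neg_integrableOn_Ioi 0 (by linarith)
    simpa [hF] using (this.const_mul (t ^ (a - 1)))
  have hslice_int : ∀ t : ℝ, 0 < t →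
      (∫ u, ‖F (t, u)‖ ∂ν) = t ^ (a - 1) / (1 + t) := by
    intro t ht
    have h1t : (0:ℝ) < 1 + t := by linarith
    have hnorm : ∀ u : ℝ, u ∈ Set.Ioi (0:ℝ) → ‖F (t, u)‖ = t ^ (a - 1) * Real.exp (-(1 + t) * u) := by
      intro u hu
      rw [Real.norm_eq_abs, abs_of_nonneg (by positivity)]
    rw [hν, setIntegral_congr_fun measurableSet_Ioi hnorm, integral_const_mul]
    have : ∫ u in Set.Ioi (0:ℝ), Real.exp (-(1 + t) * u) = 1 / (1 + t) := by
      have := Real.integral_rpow_mul_exp_neg_mul_Ioi (a := 1) one_pos h1t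
      simp only [Real.rpow_one, Real.Gamma_one, mul_one] at this
      rw [← this]
      refine setIntegral_congr_fun measurableSet_Ioi fun u hu => ?_
      rw [sub_self, Real.rpow_zero, one_mul, neg_mul]
    rw [this]
    ring
  have hFint : Integrable F (ν.prod ν) := by
    rw [MeasureTheory.integrable_prod_iff hFmeas]
    constructor
    · filter_upwards [ae_restrict_mem measurableSet_Ioi] with t ht
      exact hslice t ht
    · have : IntegrableOn (fun t : ℝ => t ^ (a - 1) / (1 + t)) (Set.Ioi 0) :=
        mellinA_integrable h0 h1
      refine this.congr ?_
      filter_upwards [ae_restrict_mem measurableSet_Ioi] with t ht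
      exact (hslice_int t ht).symm
  have hswap := MeasureTheory.integral_integral_swap (f := fun t u => F (t, u))
    (μ := ν) (ν := ν) (by exact hFint)
  -- LHS of swap equals our integral
  have hlhs : (∫ t, ∫ u, F (t, u) ∂ν ∂ν) = ∫ t in Set.Ioi (0:ℝ), t ^ (a - 1) / (1 + t) := by
    refine integral_congr_ae ?_
    filter_upwards [ae_restrict_mem measurableSet_Ioi] with t ht
    have h1t : (0:ℝ) < 1 + t := by linarith [(mem_Ioi.mp ht)]
    have : ∫ u, F (t, u) ∂ν = t ^ (a - 1) * (1 / (1 + t)) := by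
      rw [hν, hF]
      simp only
      rw [MeasureTheory.integral_const_mul]
      congr 1
      have := Real.integral_rpow_mul_exp_neg_mul_Ioi (a := 1) one_pos h1t
      simp only [Real.rpow_one, Real.Gamma_one, mul_one] at this
      rw [← this]
      refine setIntegral_congr_fun measurableSet_Ioi fun u hu => ?_
      rw [sub_self, Real.rpow_zero, one_mul, neg_mul]
    rw [this]; ring
  -- RHS of swap equals Gamma a * Gamma (1 - a)
  have hrhs : (∫ u, ∫ t, F (t, u) ∂ν ∂ν) = Real.Gamma a * Real.Gamma (1 - a) := by
    have step : ∀ u : ℝ, u ∈ Set.Ioi (0:ℝ) →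
        (∫ t, F (t, u) ∂ν) = Real.Gamma a * (Real.exp (-u) * u ^ ((1 - a) - 1)) := by
      intro u hu
      have hu0 : (0:ℝ) < u := hu
      rw [hν]
      have hptwise : ∀ t : ℝ, t ∈ Set.Ioi (0:ℝ) →
          F (t, u) = Real.exp (-u) * (t ^ (a - 1) * Real.exp (-(u * t))) := by
        intro t ht
        rw [hF]
        simp only
        have harg : -(1 + t) * u = -u + -(u * t) := by ring
        rw [harg, Real.exp_add]
        ring
      rw [setIntegral_congr_fun measurableSet_Ioi hptwise, integral_const_mul,
        Real.integral_rpow_mul_exp_neg_mul_Ioi h0 hu0]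
      have : (1 / u) ^ a = u ^ ((1 - a) - 1) := by
        rw [one_div, Real.inv_rpow hu0.le, ← Real.rpow_neg hu0.le]
        congr 1
        ring
      rw [this]
      ring
    rw [hν]
    rw [setIntegral_congr_fun measurableSet_Ioi step, integral_const_mul,
      ← Real.Gamma_eq_integral (by linarith : (0:ℝ) < 1 - a)]
  rw [hlhs, hrhs] at hswap
  rw [hswap, Real.Gamma_mul_Gamma_one_sub]

lemma hk_integrable {n k : ℕ} (hk1 : 1 ≤ k) (hkn : k < n) :
    IntegrableOn (fun t : ℝ => t ^ ((k:ℝ) - 1) / (1 + t ^ (n:ℝ))) (Set.Ioi 0) := by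
  have hk1' : (1:ℝ) ≤ k := by exact_mod_cast hk1
  have hkn' : (k:ℝ) + 1 ≤ n := by exact_mod_cast hkn
  have hmeas : AEStronglyMeasurable (fun t : ℝ => t ^ ((k:ℝ) - 1) / (1 + t ^ (n:ℝ)))
      (volume.restrict (Set.Ioi (0:ℝ))) := by
    apply Measurable.aestronglyMeasurable; fun_prop
  have hIoc : IntegrableOn (fun t : ℝ => t ^ ((k:ℝ) - 1) / (1 + t ^ (n:ℝ))) (Set.Ioc 0 1) := by
    refine Integrable.mono' (g := fun _ : ℝ => (1:ℝ))
      (integrableOn_const measure_Ioc_lt_top.ne)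
      (hmeas.mono_set Ioc_subset_Ioi_self) ?_
    filter_upwards [ae_restrict_mem measurableSet_Ioc] with t ht
    have ht0 : (0:ℝ) < t := ht.1
    have hnum : (0:ℝ) ≤ t ^ ((k:ℝ) - 1) := Real.rpow_nonneg ht0.le _
    have hden : (0:ℝ) < t ^ (n:ℝ) := Real.rpow_pos_of_pos ht0 _
    have hd : (1:ℝ) ≤ 1 + t ^ (n:ℝ) := by linarith
    rw [Real.norm_eq_abs, abs_of_nonneg (div_nonneg hnum (by linarith))]
    calc t ^ ((k:ℝ) - 1) / (1 + t ^ (n:ℝ)) ≤ t ^ ((k:ℝ) - 1) / 1 := by gcongr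
    _ = t ^ ((k:ℝ) - 1) := by ring
    _ ≤ 1 := Real.rpow_le_one ht0.le ht.2 (by linarith)
  have hIoi : IntegrableOn (fun t : ℝ => t ^ ((k:ℝ) - 1) / (1 + t ^ (n:ℝ))) (Set.Ioi 1) := by
    have hbase : IntegrableOn (fun t : ℝ => t ^ ((k:ℝ) - 1 - n)) (Set.Ioi (1:ℝ)) :=
      integrableOn_Ioi_rpow_of_lt (by linarith) one_pos
    refine hbase.mono' (hmeas.mono_set (Ioi_subset_Ioi zero_le_one)) ?_
    filter_upwards [ae_restrict_mem measurableSet_Ioi] with t ht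
    have ht0 : (0:ℝ) < t := lt_trans one_pos ht
    have hnum : (0:ℝ) ≤ t ^ ((k:ℝ) - 1) := Real.rpow_nonneg ht0.le _
    have hden : (0:ℝ) < t ^ (n:ℝ) := Real.rpow_pos_of_pos ht0 _
    rw [Real.norm_eq_abs, abs_of_nonneg (div_nonneg hnum (by linarith))]
    calc t ^ ((k:ℝ) - 1) / (1 + t ^ (n:ℝ)) ≤ t ^ ((k:ℝ) - 1) / t ^ (n:ℝ) := by
          gcongr
          linarith
    _ = t ^ ((k:ℝ) - 1 - n) := by
          rw [← Real.rpow_sub ht0]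
  have := hIoc.union hIoi
  rwa [Set.Ioc_union_Ioi_eq_Ioi zero_le_one] at this

lemma hk_integral {n k : ℕ} (hk1 : 1 ≤ k) (hkn : k < n) :
    ∫ t in Set.Ioi (0:ℝ), t ^ ((k:ℝ) - 1) / (1 + t ^ (n:ℝ)) =
      (1 / (n:ℝ)) * (π / Real.sin (π * ((k:ℝ) / n))) := by
  have hn0 : 0 < n := lt_trans (Nat.lt_of_lt_of_le Nat.zero_lt_one hk1) hkn
  have hN : (0:ℝ) < n := by exact_mod_cast hn0
  set a : ℝ := (k:ℝ) / n with ha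
  have ha0 : 0 < a := by positivity
  have ha1 : a < 1 := by
    rw [ha, div_lt_one hN]; exact_mod_cast hkn
  have key := integral_comp_rpow_Ioi_of_pos
    (g := fun y : ℝ => (1 / (n:ℝ)) * (y ^ (a - 1) / (1 + y))) (p := (n:ℝ)) hN
  have hlhs : (∫ x in Set.Ioi (0:ℝ),
      ((n:ℝ) * x ^ ((n:ℝ) - 1)) • ((1 / (n:ℝ)) * ((x ^ (n:ℝ)) ^ (a - 1) / (1 + x ^ (n:ℝ))))) =
      ∫ t in Set.Ioi (0:ℝ), t ^ ((k:ℝ) - 1) / (1 + t ^ (n:ℝ)) := by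
    refine setIntegral_congr_fun measurableSet_Ioi fun x hx => ?_
    have hx0 : (0:ℝ) < x := hx
    have h1 : (x ^ (n:ℝ)) ^ (a - 1) = x ^ ((k:ℝ) - n) := by
      rw [← Real.rpow_mul hx0.le]
      congr 1
      rw [ha]
      field_simp
    rw [smul_eq_mul, h1]
    rw [show ((n:ℝ) * x ^ ((n:ℝ) - 1)) * ((1 / (n:ℝ)) * (x ^ ((k:ℝ) - n) / (1 + x ^ (n:ℝ)))) =
      (x ^ ((n:ℝ) - 1) * x ^ ((k:ℝ) - n)) / (1 + x ^ (n:ℝ)) * ((n:ℝ) * (1 / n)) by ring]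
    rw [← Real.rpow_add hx0, mul_one_div, div_self (ne_of_gt hN)]
    rw [show (n:ℝ) - 1 + ((k:ℝ) - n) = (k:ℝ) - 1 by ring]
    ring
  rw [hlhs] at key
  rw [key, MeasureTheory.integral_const_mul, mellinA_eq ha0 ha1]


lemma tanh_formula (y : ℝ) :
    Real.tanh y = (1 - Real.exp (-2 * y)) / (1 + Real.exp (-2 * y)) := by
  have hg : Real.exp (-2 * y) = Real.exp (-y) * Real.exp (-y) := by
    rw [← Real.exp_add]; congr 1; ring
  have h2 : Real.exp y * Real.exp (-y) = 1 := by
    rw [← Real.exp_add]; simp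
  rw [Real.tanh_eq_sinh_div_cosh, Real.sinh_eq, Real.cosh_eq, hg]
  have hc : (0:ℝ) < Real.exp y + Real.exp (-y) := by positivity
  have hd : (0:ℝ) < 1 + Real.exp (-y) * Real.exp (-y) := by positivity
  field_simp
  ring_nf
  nlinarith [h2, Real.exp_pos y, Real.exp_pos (-y)]

lemma tanh_ratio {n : ℕ} (hn : 2 ≤ n) {x : ℝ} (hx : 0 < x) :
    Real.tanh (n * x) / Real.tanh x - 1 =
      2 * (∑ k ∈ Finset.Ico 1 n, Real.exp (-2 * x) ^ k) / (1 + Real.exp (-2 * x) ^ n) := by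
  have hun : Real.exp (-2 * ((n:ℝ) * x)) = Real.exp (-2 * x) ^ n := by
    rw [← Real.exp_nat_mul]; congr 1; ring
  rw [tanh_formula, tanh_formula, hun]
  have hx' : Real.exp (-2 * x) < 1 := by
    rw [Real.exp_lt_one_iff]; linarith
  have hx0 : 0 < Real.exp (-2 * x) := Real.exp_pos _
  generalize hG : Real.exp (-2 * x) = u at hx' hx0 ⊢
  have hsum : ∑ k ∈ Finset.Ico 1 n, u ^ k = (u ^ n - u ^ 1) / (u - 1) :=
    geom_sum_Ico (ne_of_lt hx') (le_of_lt (lt_of_lt_of_le one_lt_two hn))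
  rw [hsum, pow_one]
  have h1 : u - 1 ≠ 0 := by linarith
  have h2 : (1:ℝ) - u ≠ 0 := by linarith
  have h3 : (0:ℝ) < 1 + u := by linarith
  have h4 : (0:ℝ) < 1 + u ^ n := by positivity
  field_simp
  ring


lemma G_even {n : ℕ} (x : ℝ) :
    2 * (∑ k ∈ Finset.Ico 1 n, Real.exp (-2 * (-x)) ^ k) / (1 + Real.exp (-2 * (-x)) ^ n) =
    2 * (∑ k ∈ Finset.Ico 1 n, Real.exp (-2 * x) ^ k) / (1 + Real.exp (-2 * x) ^ n) := by
  set u : ℝ := Real.exp (-2 * x) with hu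
  set v : ℝ := Real.exp (-2 * (-x)) with hv
  have hu0 : 0 < u := Real.exp_pos _
  have huv : v * u = 1 := by
    rw [hu, hv, ← Real.exp_add, show -2 * -x + -2 * x = 0 by ring, Real.exp_zero]
  have hun : u ^ n ≠ 0 := by positivity
  have hnum : (∑ k ∈ Finset.Ico 1 n, v ^ k) * u ^ n = ∑ k ∈ Finset.Ico 1 n, u ^ k := by
    rw [Finset.sum_mul]
    rw [show (∑ k ∈ Finset.Ico 1 n, u ^ k) = ∑ k ∈ Finset.Ico 1 n, u ^ (n - k) from ?_]
    · refine Finset.sum_congr rfl fun k hk => ?_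
      rw [Finset.mem_Ico] at hk
      have : u ^ n = u ^ k * u ^ (n - k) := by
        rw [← pow_add]; congr 1; omega
      rw [this, ← mul_assoc, ← mul_pow, huv, one_pow, one_mul]
    · refine (Finset.sum_nbij' (i := fun k => n - k) (j := fun k => n - k) ?_ ?_ ?_ ?_ ?_).symm
      · intro a ha; simp only [Finset.mem_Ico] at ha ⊢; omega
      · intro a ha; simp only [Finset.mem_Ico] at ha ⊢; omega
      · intro a ha; simp only [Finset.mem_Ico] at ha; show n - (n - a) = a; omega
      · intro a ha; simp only [Finset.mem_Ico] at ha; show n - (n - a) = a; omega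
      · intro a ha; rfl
  have hden : (1 + v ^ n) * u ^ n = u ^ n + 1 := by
    have h1 : v ^ n * u ^ n = 1 := by rw [← mul_pow, huv, one_pow]
    rw [add_mul, one_mul, h1]
  rw [show 2 * (∑ k ∈ Finset.Ico 1 n, v ^ k) / (1 + v ^ n) =
      2 * ((∑ k ∈ Finset.Ico 1 n, v ^ k) * u ^ n) / ((1 + v ^ n) * u ^ n) from ?_]
  · rw [hnum, hden, add_comm (u ^ n) 1]
  · have hv0 : 0 < v := Real.exp_pos _
    have hD : (1:ℝ) + v ^ n ≠ 0 := by positivity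
    field_simp

lemma G_integrableOn {n : ℕ} (hn : 2 ≤ n) :
    IntegrableOn (fun x : ℝ =>
      2 * (∑ k ∈ Finset.Ico 1 n, Real.exp (-2 * x) ^ k) / (1 + Real.exp (-2 * x) ^ n))
      (Set.Ioi 0) := by
  have hint : IntegrableOn (fun x : ℝ => 2 * (((n:ℝ) - 1) * Real.exp (-2 * x))) (Set.Ioi 0) :=
    ((exp_neg_integrableOn_Ioi 0 two_pos).const_mul _).const_mul 2
  refine hint.mono' (Measurable.aestronglyMeasurable (by fun_prop)) ?_
  filter_upwards [ae_restrict_mem measurableSet_Ioi] with x hx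
  have hx0 : (0:ℝ) < x := hx
  set u : ℝ := Real.exp (-2 * x) with hu
  have hu0 : 0 < u := Real.exp_pos _
  have hu1 : u ≤ 1 := by
    rw [hu]; exact Real.exp_le_one_iff.mpr (by linarith)
  set S : ℝ := ∑ k ∈ Finset.Ico 1 n, u ^ k with hS
  have hS0 : 0 ≤ S := Finset.sum_nonneg fun k _ => pow_nonneg hu0.le _
  have hSle : S ≤ ((n:ℝ) - 1) * u := by
    have h1 : S ≤ ∑ _k ∈ Finset.Ico 1 n, u := by
      refine Finset.sum_le_sum fun k hk => ?_
      have hk1 : 1 ≤ k := (Finset.mem_Ico.mp hk).1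
      calc u ^ k ≤ u ^ 1 := pow_le_pow_of_le_one hu0.le hu1 hk1
      _ = u := pow_one u
    have h2 : (∑ _k ∈ Finset.Ico 1 n, u) = ((n:ℝ) - 1) * u := by
      rw [Finset.sum_const, Nat.card_Ico, nsmul_eq_mul]
      congr 1
      push_cast [Nat.cast_sub (by omega : 1 ≤ n)]
      ring
    linarith
  have hun0 : (0:ℝ) ≤ u ^ n := pow_nonneg hu0.le n
  have hd1 : (1:ℝ) ≤ 1 + u ^ n := by linarith
  rw [Real.norm_eq_abs, abs_of_nonneg (div_nonneg (by linarith) (by linarith))]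
  calc 2 * S / (1 + u ^ n) ≤ 2 * S / 1 := by gcongr
  _ = 2 * S := div_one _
  _ ≤ 2 * (((n:ℝ) - 1) * u) := by linarith

lemma G_subst {n : ℕ} (hn : 2 ≤ n) :
    ∫ t in Set.Ioi (0:ℝ), (∑ k ∈ Finset.Ico 1 n, t ^ ((k:ℝ) - 1) / (1 + t ^ (n:ℝ))) =
    ∫ x : ℝ, 2 * (∑ k ∈ Finset.Ico 1 n, Real.exp (-2 * x) ^ k) /
      (1 + Real.exp (-2 * x) ^ n) := by
  have hderiv : ∀ x ∈ (Set.univ : Set ℝ), HasDerivWithinAt (fun y : ℝ => Real.exp (-2 * y))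
      (-2 * Real.exp (-2 * x)) Set.univ x := by
    intro x _
    have h0 : HasDerivAt (fun y : ℝ => -2 * y) (-2) x := by
      have := (hasDerivAt_id x).const_mul (-2:ℝ)
      simpa using this
    have hexp := h0.exp
    rw [mul_comm] at hexp
    exact hexp.hasDerivWithinAt
  have hinj : Set.InjOn (fun y : ℝ => Real.exp (-2 * y)) Set.univ := by
    intro a _ b _ hab
    have := Real.exp_injective hab
    linarith
  have himg : (fun y : ℝ => Real.exp (-2 * y)) '' Set.univ = Set.Ioi (0:ℝ) := by
    ext y
    constructor
    · rintro ⟨x, -, rfl⟩; exact Real.exp_pos _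
    · intro hy
      refine ⟨-(Real.log y) / 2, trivial, ?_⟩
      show Real.exp (-2 * (-(Real.log y) / 2)) = y
      rw [show -2 * (-(Real.log y) / 2) = Real.log y by ring, Real.exp_log hy]
  have key := integral_image_eq_integral_abs_deriv_smul (MeasurableSet.univ)
    hderiv hinj (fun t : ℝ => ∑ k ∈ Finset.Ico 1 n, t ^ ((k:ℝ) - 1) / (1 + t ^ (n:ℝ)))
  rw [himg, Measure.restrict_univ] at key
  rw [key]
  refine integral_congr_ae (Filter.Eventually.of_forall fun x => ?_)
  dsimp only
  rw [smul_eq_mul]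
  set u : ℝ := Real.exp (-2 * x) with hu
  have hu0 : 0 < u := Real.exp_pos _
  have habs : |(-2 : ℝ) * u| = 2 * u := by
    rw [abs_mul, abs_of_pos hu0]; norm_num
  rw [habs]
  have hterm : ∀ k ∈ Finset.Ico 1 n,
      u ^ ((k:ℝ) - 1) / (1 + u ^ (n:ℝ)) = u ^ k / (u * (1 + u ^ n)) := by
    intro k hk
    have h1 : u ^ ((k:ℝ) - 1) = u ^ (k:ℕ) / u := by
      rw [Real.rpow_sub hu0, Real.rpow_one, Real.rpow_natCast]
    have h2 : u ^ (n:ℝ) = u ^ (n:ℕ) := Real.rpow_natCast u n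
    rw [h1, h2, div_div]
  rw [Finset.sum_congr rfl hterm, ← Finset.sum_div]
  have hden : u * (1 + u ^ n) ≠ 0 := by positivity
  have hden2 : (1:ℝ) + u ^ n ≠ 0 := by positivity
  field_simp

theorem csc_sum_integral (n : ℕ) (hn : 2 ≤ n) :
    IntegrableOn (fun x : ℝ => Real.tanh (n * x) / Real.tanh x - 1) (Set.Ioi 0) ∧
    ∑ l ∈ Finset.Ico 1 n, (Real.sin (π * l / n))⁻¹ =
      (2 * n / π) * ∫ x in Set.Ioi (0 : ℝ), (Real.tanh (n * x) / Real.tanh x - 1) := by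
  have hn0 : 0 < n := by omega
  have hN : (0:ℝ) < n := by exact_mod_cast hn0
  set G : ℝ → ℝ := fun x =>
    2 * (∑ k ∈ Finset.Ico 1 n, Real.exp (-2 * x) ^ k) / (1 + Real.exp (-2 * x) ^ n) with hGdef
  have hGInt : IntegrableOn G (Set.Ioi 0) := G_integrableOn hn
  have hInt : IntegrableOn (fun x : ℝ => Real.tanh (n * x) / Real.tanh x - 1) (Set.Ioi 0) :=
    IntegrableOn.congr_fun hGInt (fun x hx => (tanh_ratio hn hx).symm) measurableSet_Ioi
  refine ⟨hInt, ?_⟩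
  have h1 : ∫ x in Set.Ioi (0:ℝ), (Real.tanh (n * x) / Real.tanh x - 1) =
      ∫ x in Set.Ioi (0:ℝ), G x :=
    setIntegral_congr_fun measurableSet_Ioi fun x hx => tanh_ratio hn hx
  have h2 : ∫ x : ℝ, G x = 2 * ∫ x in Set.Ioi (0:ℝ), G x := by
    have habs : ∀ x : ℝ, G |x| = G x := by
      intro x
      rcases abs_choice x with h | h
      · rw [h]
      · rw [h]; exact G_even x
    calc ∫ x : ℝ, G x = ∫ x : ℝ, G |x| :=
          integral_congr_ae (Filter.Eventually.of_forall fun x => (habs x).symm)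
    _ = 2 * ∫ x in Set.Ioi (0:ℝ), G x := integral_comp_abs
  have h3 := G_subst hn
  have h4 : ∫ t in Set.Ioi (0:ℝ),
      (∑ k ∈ Finset.Ico 1 n, t ^ ((k:ℝ) - 1) / (1 + t ^ (n:ℝ))) =
      ∑ k ∈ Finset.Ico 1 n, (1 / (n:ℝ)) * (π / Real.sin (π * ((k:ℝ) / n))) := by
    rw [MeasureTheory.integral_finset_sum _ fun k hk => by
      have hk' := Finset.mem_Ico.mp hk
      exact hk_integrable hk'.1 hk'.2]
    exact Finset.sum_congr rfl fun k hk => by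
      have hk' := Finset.mem_Ico.mp hk
      exact hk_integral hk'.1 hk'.2
  have hIoiG : ∫ x in Set.Ioi (0:ℝ), G x =
      (∑ k ∈ Finset.Ico 1 n, (1 / (n:ℝ)) * (π / Real.sin (π * ((k:ℝ) / n)))) / 2 := by
    rw [← h4, h3, ← hGdef, h2]
    ring
  rw [h1, hIoiG, Finset.sum_div, Finset.mul_sum]
  refine Finset.sum_congr rfl fun k hk => ?_
  have hk' := Finset.mem_Ico.mp hk
  have hk1 : (1:ℝ) ≤ k := by exact_mod_cast hk'.1
  have hkn : (k:ℝ) < n := by exact_mod_cast hk'.2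
  have harg : π * (k:ℝ) / n = π * ((k:ℝ) / n) := mul_div_assoc _ _ _
  have hsin : 0 < Real.sin (π * (k:ℝ) / n) := by
    apply Real.sin_pos_of_pos_of_lt_pi
    · have : (0:ℝ) < (k:ℝ) / n := by positivity
      rw [harg]; positivity
    · rw [harg]
      calc π * ((k:ℝ) / n) < π * 1 := by
            apply mul_lt_mul_of_pos_left _ Real.pi_pos
            rw [div_lt_one hN]; exact hkn
      _ = π := mul_one π
  rw [← harg]
  have hπ : π ≠ 0 := Real.pi_ne_zero
  have hs : Real.sin (π * (k:ℝ) / n) ≠ 0 := ne_of_gt hsin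
  field_simp
end

section
/- For every natural number n ≥ 2, ∑_{l=1}^{n-1} csc(πl/n) < (2n/π)·(log(2n/π) + γ) + 1 − 1/π, where γ is the Euler–Mascheroni constant. -/
open Real Finset intervalIntegral MeasureTheory

set_option maxHeartbeats 1000000

namespace CscBound

lemma nonneg_of_deriv {f f' : ℝ → ℝ} (hd : ∀ x, HasDerivAt f (f' x) x)
    (h0 : f 0 = 0) (hf' : ∀ x, 0 < x → 0 ≤ f' x) {x : ℝ} (hx : 0 ≤ x) : 0 ≤ f x := by
  have hm : MonotoneOn f (Set.Ici 0) := by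
    apply monotoneOn_of_deriv_nonneg (convex_Ici 0)
    · exact (continuous_iff_continuousAt.mpr fun y => (hd y).continuousAt).continuousOn
    · intro y hy; exact (hd y).differentiableAt.differentiableWithinAt
    · intro y hy
      rw [interior_Ici] at hy
      rw [(hd y).deriv]; exact hf' y hy
  have := hm Set.self_mem_Ici hx hx
  rwa [h0] at this

lemma sin_ge (x : ℝ) (hx : 0 ≤ x) : x - x^3/6 ≤ sin x := by
  have := nonneg_of_deriv (f := fun x => sin x - x + x^3/6)
    (f' := fun x => cos x - 1 + x^2/2) (fun y => by
      have h1 : HasDerivAt (fun x : ℝ => sin x - x + x^3/6) (cos y - 1 + (3*y^2)/6) y := by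
        exact ((Real.hasDerivAt_sin y).sub (hasDerivAt_id y)).add ((hasDerivAt_pow 3 y).div_const 6)
      exact h1.congr_deriv (by ring))
    (by norm_num) (fun y hy => by nlinarith [Real.one_sub_sq_div_two_le_cos (x := y)]) hx
  linarith

lemma cos_le' (x : ℝ) (hx : 0 ≤ x) : cos x ≤ 1 - x^2/2 + x^4/24 := by
  have := nonneg_of_deriv (f := fun x => 1 - x^2/2 + x^4/24 - cos x)
    (f' := fun x => -x + x^3/6 + sin x) (fun y => by
      have h1 : HasDerivAt (fun x : ℝ => 1 - x^2/2 + x^4/24 - cos x)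
          (0 - (2*y^1)/2 + (4*y^3)/24 - (-sin y)) y := by
        exact (((hasDerivAt_const y (1:ℝ)).sub ((hasDerivAt_pow 2 y).div_const 2)).add
          ((hasDerivAt_pow 4 y).div_const 24)).sub (Real.hasDerivAt_cos y)
      exact h1.congr_deriv (by ring))
    (by norm_num) (fun y hy => by nlinarith [sin_ge y hy.le]) hx
  linarith

lemma sin_le' (x : ℝ) (hx : 0 ≤ x) : sin x ≤ x - x^3/6 + x^5/120 := by
  have := nonneg_of_deriv (f := fun x => x - x^3/6 + x^5/120 - sin x)
    (f' := fun x => 1 - x^2/2 + x^4/24 - cos x) (fun y => by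
      have h1 : HasDerivAt (fun x : ℝ => x - x^3/6 + x^5/120 - sin x)
          (1 - (3*y^2)/6 + (5*y^4)/120 - cos y) y := by
        exact (((hasDerivAt_id y).sub ((hasDerivAt_pow 3 y).div_const 6)).add
          ((hasDerivAt_pow 5 y).div_const 120)).sub (Real.hasDerivAt_sin y)
      exact h1.congr_deriv (by ring))
    (by norm_num) (fun y hy => by nlinarith [cos_le' y hy.le]) hx
  linarith

lemma cos_ge' (x : ℝ) (hx : 0 ≤ x) : 1 - x^2/2 + x^4/24 - x^6/720 ≤ cos x := by
  have := nonneg_of_deriv (f := fun x => cos x - 1 + x^2/2 - x^4/24 + x^6/720)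
    (f' := fun x => -sin x + x - x^3/6 + x^5/120) (fun y => by
      have h1 : HasDerivAt (fun x : ℝ => cos x - 1 + x^2/2 - x^4/24 + x^6/720)
          (-sin y - 0 + (2*y^1)/2 - (4*y^3)/24 + (6*y^5)/720) y := by
        exact ((((Real.hasDerivAt_cos y).sub (hasDerivAt_const y (1:ℝ))).add
          ((hasDerivAt_pow 2 y).div_const 2)).sub ((hasDerivAt_pow 4 y).div_const 24)).add
          ((hasDerivAt_pow 6 y).div_const 720)
      exact h1.congr_deriv (by ring))
    (by norm_num) (fun y hy => by nlinarith [sin_le' y hy.le]) hx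
  linarith

lemma tan_ge (x : ℝ) (hx : 0 ≤ x) (hx2 : x < π/2) : x + x^3/3 ≤ tan x := by
  have hm : MonotoneOn (fun t => tan t - t - t^3/3) (Set.Ico 0 (π/2)) := by
    apply monotoneOn_of_deriv_nonneg (convex_Ico 0 (π/2))
    · apply ContinuousOn.sub
      apply ContinuousOn.sub
      · apply Real.continuousOn_tan.mono
        intro t ht
        simp only [Set.mem_setOf_eq]
        exact Real.cos_pos_of_mem_Ioo ⟨by linarith [ht.1, Real.pi_pos], ht.2⟩ |>.ne'
      · exact continuousOn_id
      · exact (continuous_pow 3).continuousOn.div_const 3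
    · intro t ht
      rw [interior_Ico] at ht
      have hc : cos t ≠ 0 := (Real.cos_pos_of_mem_Ioo ⟨by linarith [ht.1, Real.pi_pos], ht.2⟩).ne'
      exact (((Real.hasDerivAt_tan hc).sub (hasDerivAt_id t)).sub
        ((hasDerivAt_pow 3 t).div_const 3)).differentiableAt.differentiableWithinAt
    · intro t ht
      rw [interior_Ico] at ht
      have hc : 0 < cos t := Real.cos_pos_of_mem_Ioo ⟨by linarith [ht.1, Real.pi_pos], ht.2⟩
      have hd : HasDerivAt (fun t => tan t - t - t^3/3) (1/cos t^2 - 1 - (3*t^2)/3) t :=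
        ((Real.hasDerivAt_tan hc.ne').sub (hasDerivAt_id t)).sub ((hasDerivAt_pow 3 t).div_const 3)
      rw [hd.deriv]
      have htan : t ≤ tan t := Real.le_tan ht.1.le ht.2
      have h2 : 1/cos t^2 - 1 = tan t ^ 2 := by
        rw [Real.tan_eq_sin_div_cos, div_pow]
        field_simp
        nlinarith [Real.sin_sq_add_cos_sq t]
      rw [h2]
      nlinarith [ht.1]
  have h0 : (0:ℝ) ∈ Set.Ico 0 (π/2) := ⟨le_refl _, by linarith [Real.pi_pos]⟩
  have := hm h0 ⟨hx, hx2⟩ hx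
  simp only [Real.tan_zero] at this
  nlinarith


noncomputable def g (x : ℝ) : ℝ := (Real.sin x)⁻¹ - x⁻¹ - (π - x)⁻¹

noncomputable def gd (x : ℝ) : ℝ := (x^2)⁻¹ - ((π - x)^2)⁻¹ - cos x / sin x ^ 2

lemma sin_pos' {x : ℝ} (h1 : 0 < x) (h2 : x < π) : 0 < sin x :=
  Real.sin_pos_of_pos_of_lt_pi h1 h2

lemma g_hasDeriv {x : ℝ} (h1 : 0 < x) (h2 : x < π) : HasDerivAt g (gd x) x := by
  have hs : sin x ≠ 0 := (sin_pos' h1 h2).ne'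
  have hπx : π - x ≠ 0 := sub_ne_zero.mpr h2.ne'
  have d1 : HasDerivAt (fun x => (Real.sin x)⁻¹) (-cos x / sin x ^ 2) x :=
    (Real.hasDerivAt_sin x).inv hs
  have d2 : HasDerivAt (fun x : ℝ => x⁻¹) (-(x^2)⁻¹) x := hasDerivAt_inv h1.ne'
  have d3 : HasDerivAt (fun x : ℝ => (π - x)⁻¹) (-(0-1) / (π - x)^2) x :=
    ((hasDerivAt_const x π).sub (hasDerivAt_id x)).inv hπx
  have h := (d1.sub d2).sub d3
  apply h.congr_deriv
  unfold gd
  field_simp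
  ring

lemma sinsq_lb (x : ℝ) (hx : 0 ≤ x) : x^2 - x^4/3 ≤ sin x ^ 2 := by
  have h := cos_le' (2*x) (by linarith)
  have h2 : sin x ^ 2 = 1/2 - cos (2*x)/2 := Real.sin_sq_eq_half_sub x
  nlinarith

lemma sinsq_ub (x : ℝ) (hx : 0 ≤ x) : sin x ^ 2 ≤ x^2 - x^4/3 + 2*x^6/45 := by
  have h := cos_ge' (2*x) (by linarith)
  have h2 : sin x ^ 2 = 1/2 - cos (2*x)/2 := Real.sin_sq_eq_half_sub x
  nlinarith

lemma num_lb (x : ℝ) (hx : 0 ≤ x) : x^4/6 - x^6/24 ≤ sin x ^ 2 - x^2 * cos x := by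
  have h1 := sinsq_lb x hx
  have h2 := cos_le' x hx
  nlinarith

lemma num_ub (x : ℝ) (hx : 0 ≤ x) : sin x ^ 2 - x^2 * cos x ≤ x^4/6 + x^6/360 + x^8/720 := by
  have h1 := sinsq_ub x hx
  have h2 := cos_ge' x hx
  nlinarith

lemma gd_split {x : ℝ} (h1 : 0 < x) (h2 : x < π) :
    gd x = (sin x ^ 2 - x^2 * cos x) / (x^2 * sin x ^ 2) - ((π - x)^2)⁻¹ := by
  have hs : sin x ≠ 0 := (sin_pos' h1 h2).ne'
  have hπx : π - x ≠ 0 := sub_ne_zero.mpr h2.ne'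
  unfold gd
  field_simp
  ring

lemma gd_lb {x : ℝ} (h1 : 0 < x) (h2 : x ≤ π/2) : -(7/20) ≤ gd x := by
  have hπ := Real.pi_gt_d6
  have hπ' := Real.pi_lt_d6
  have hπ2 : π^2 < 9.8696066 := by nlinarith
  have hπ2' : 9.8696002 < π^2 := by nlinarith
  have h2' : x < π := by linarith
  have hs := sin_pos' h1 h2'
  have hu : x^2 ≤ 2.4674017 := by nlinarith
  rw [gd_split h1 h2']
  have hnum := num_lb x h1.le
  have hnum0 : 0 ≤ x^4/6 - x^6/24 := by
    nlinarith [mul_le_mul_of_nonneg_left hu (by positivity : (0:ℝ) ≤ x^4)]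
  have hden : 0 < x^2 * sin x ^ 2 := by positivity
  have hden' : x^2 * sin x ^ 2 ≤ x^4 := by
    have h := Real.sin_sq_le_sq (x := x)
    nlinarith
  have e1 : (x^4/6 - x^6/24) / x^4 ≤ (sin x ^ 2 - x^2 * cos x) / (x^2 * sin x ^ 2) :=
    div_le_div₀ (by linarith) hnum hden hden'
  have e2 : (x^4/6 - x^6/24) / x^4 = 1/6 - x^2/24 := by
    field_simp
  rw [e2] at e1
  have e3 : ((π - x)^2)⁻¹ ≤ ((π/2)^2)⁻¹ :=
    inv_anti₀ (by positivity) (by nlinarith)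
  have e4 : ((π/2)^2)⁻¹ ≤ 0.40529 := by
    have h10 : ((0.40529 : ℝ))⁻¹ ≤ (π/2)^2 := by
      rw [show ((0.40529 : ℝ))⁻¹ = 100000/40529 by norm_num]
      nlinarith
    calc ((π/2)^2)⁻¹ ≤ (((0.40529 : ℝ))⁻¹)⁻¹ := inv_anti₀ (by norm_num) h10
    _ = 0.40529 := by norm_num
  linarith

lemma gd_ub {x : ℝ} (h1 : 0 < x) (h2 : x ≤ π/2) : gd x ≤ 7/20 := by
  have hπ := Real.pi_gt_d6
  have hπ' := Real.pi_lt_d6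
  have hπ2 : π^2 < 9.8696066 := by nlinarith
  have hπ2' : 9.8696002 < π^2 := by nlinarith
  have h2' : x < π := by linarith
  have hs := sin_pos' h1 h2'
  have hu : x^2 ≤ 2.4674017 := by nlinarith
  rw [gd_split h1 h2']
  have hnum := num_ub x h1.le
  have hden : 0 < x^2 * sin x ^ 2 := by positivity
  have hx4 : (0:ℝ) ≤ x^4 := by positivity
  have key : sin x ^ 2 - x^2 * cos x ≤ (9/20) * (x^2 * sin x ^ 2) := by
    rcases le_or_gt x 1 with hx1 | hx1
    · have hsin : x - x^3/6 ≤ sin x := sin_ge x h1.le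
      have hsin0 : 0 ≤ x - x^3/6 := by nlinarith
      have hsq : (x - x^3/6)^2 ≤ sin x ^ 2 := by nlinarith
      have h6 : x^6 ≤ x^4 := pow_le_pow_of_le_one h1.le hx1 (by norm_num)
      have h8 : x^8 ≤ x^4 := pow_le_pow_of_le_one h1.le hx1 (by norm_num)
      have e : (9/20) * (x^2 * (x - x^3/6)^2) ≤ (9/20) * (x^2 * sin x ^ 2) := by nlinarith
      nlinarith [pow_nonneg h1.le 8]
    · have hsin : 2/π * x ≤ sin x := Real.mul_le_sin h1.le h2
      have hden2 : 4/π^2 * x^4 ≤ x^2 * sin x ^ 2 := by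
        have h := mul_le_mul_of_nonneg_left
          (pow_le_pow_left₀ (by positivity) hsin 2) (sq_nonneg x)
        have e : x^2 * (2/π*x)^2 = 4/π^2 * x^4 := by field_simp; ring
        rw [e] at h; exact h
      have hu2 : (x^2)^2 ≤ 2.4674017^2 := pow_le_pow_left₀ (sq_nonneg x) hu 2
      have hA : x^4/6 + x^6/360 + x^8/720 ≤ 0.1819764 * x^4 := by
        nlinarith [mul_le_mul_of_nonneg_left hu hx4,
          mul_le_mul_of_nonneg_left hu2 hx4]
      have hB : 0.1819764 * x^4 ≤ (9/5) / π^2 * x^4 := by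
        apply mul_le_mul_of_nonneg_right _ hx4
        rw [le_div_iff₀ (by positivity)]
        nlinarith
      have hC : (9/5) / π^2 * x^4 = (9/20) * (4/π^2 * x^4) := by ring
      calc sin x ^ 2 - x^2 * cos x ≤ x^4/6 + x^6/360 + x^8/720 := hnum
        _ ≤ 0.1819764 * x^4 := hA
        _ ≤ (9/5) / π^2 * x^4 := hB
        _ = (9/20) * (4/π^2 * x^4) := hC
        _ ≤ (9/20) * (x^2 * sin x ^ 2) := by linarith
  have e1 : (sin x ^ 2 - x^2 * cos x) / (x^2 * sin x ^ 2) ≤ 9/20 := by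
    rw [div_le_iff₀ hden]; linarith [key]
  have e3 : (π^2)⁻¹ ≤ ((π - x)^2)⁻¹ :=
    inv_anti₀ (pow_pos (by linarith : (0:ℝ) < π - x) 2) (by nlinarith)
  have e4 : (0.1 : ℝ) ≤ (π^2)⁻¹ := by
    calc (0.1 : ℝ) = (10 : ℝ)⁻¹ := by norm_num
    _ ≤ (π^2)⁻¹ := inv_anti₀ (by positivity) (by nlinarith)
  linarith

lemma g_reflect (x : ℝ) : g (π - x) = g x := by
  unfold g
  rw [Real.sin_pi_sub]
  ring_nf

lemma gd_reflect (x : ℝ) : gd (π - x) = -gd x := by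
  unfold gd
  rw [Real.cos_pi_sub, Real.sin_pi_sub]
  ring_nf

lemma gd_bound {x : ℝ} (h1 : 0 < x) (h2 : x < π) : -(7/20) ≤ gd x ∧ gd x ≤ 7/20 := by
  rcases le_or_gt x (π/2) with h | h
  · exact ⟨gd_lb h1 h, gd_ub h1 h⟩
  · have h1' : 0 < π - x := by linarith
    have h2'' : π - x ≤ π/2 := by linarith
    have ha := gd_lb h1' h2''
    have hb := gd_ub h1' h2''
    have hr : gd (π - (π - x)) = -gd (π - x) := gd_reflect (π - x)
    simp only [sub_sub_cancel] at hr
    rw [hr]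
    constructor <;> linarith


lemma g_intble {u v : ℝ} (hu : 0 < u) (hv : v < π) (huv : u ≤ v) :
    IntervalIntegrable g MeasureTheory.volume u v := by
  apply ContinuousOn.intervalIntegrable
  rw [Set.uIcc_of_le huv]
  exact fun x hx =>
    (g_hasDeriv (lt_of_lt_of_le hu hx.1) (lt_of_le_of_lt hx.2 hv)).continuousAt.continuousWithinAt

lemma has_deriv_add {x : ℝ} (h1 : 0 < x) (h2 : x < π) :
    HasDerivAt (fun t => g t + (7/20)*t) (gd x + 7/20) x := by
  have := (g_hasDeriv h1 h2).add ((hasDerivAt_id x).const_mul (7/20 : ℝ))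
  exact this.congr_deriv (by ring)

lemma has_deriv_sub {x : ℝ} (h1 : 0 < x) (h2 : x < π) :
    HasDerivAt (fun t => (7/20)*t - g t) (7/20 - gd x) x := by
  have := ((hasDerivAt_id x).const_mul (7/20 : ℝ)).sub (g_hasDeriv h1 h2)
  exact this.congr_deriv (by ring)

lemma mono_add : MonotoneOn (fun t => g t + (7/20)*t) (Set.Ioo 0 π) := by
  apply monotoneOn_of_deriv_nonneg (convex_Ioo 0 π)
  · exact fun x hx => (has_deriv_add hx.1 hx.2).continuousAt.continuousWithinAt
  · intro x hx
    rw [interior_Ioo] at hx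
    exact (has_deriv_add hx.1 hx.2).differentiableAt.differentiableWithinAt
  · intro x hx
    rw [interior_Ioo] at hx
    rw [(has_deriv_add hx.1 hx.2).deriv]
    linarith [(gd_bound hx.1 hx.2).1]

lemma mono_sub : MonotoneOn (fun t => (7/20)*t - g t) (Set.Ioo 0 π) := by
  apply monotoneOn_of_deriv_nonneg (convex_Ioo 0 π)
  · exact fun x hx => (has_deriv_sub hx.1 hx.2).continuousAt.continuousWithinAt
  · intro x hx
    rw [interior_Ioo] at hx
    exact (has_deriv_sub hx.1 hx.2).differentiableAt.differentiableWithinAt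
  · intro x hx
    rw [interior_Ioo] at hx
    rw [(has_deriv_sub hx.1 hx.2).deriv]
    linarith [(gd_bound hx.1 hx.2).2]

lemma lin_integral (A B u v : ℝ) :
    ∫ t in u..v, (A + B*t) = A*(v-u) + B*(v^2-u^2)/2 := by
  have h1 : IntervalIntegrable (fun t : ℝ => B*t) MeasureTheory.volume u v := by
    apply Continuous.intervalIntegrable; fun_prop
  rw [intervalIntegral.integral_add (intervalIntegrable_const) h1,
    intervalIntegral.integral_const, intervalIntegral.integral_const_mul, integral_id]
  simp [smul_eq_mul]
  ring

lemma chunk_right {c v : ℝ} (hc : 0 < c) (hcv : c ≤ v) (hv : v < π) :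
    g c * (v - c) - (7/20)*(v-c)^2/2 ≤ ∫ t in c..v, g t := by
  have hpt : ∀ t ∈ Set.Icc c v, (g c + (7/20)*c) + (-(7/20))*t ≤ g t := by
    intro t ht
    have h := mono_add ⟨hc, lt_of_le_of_lt hcv hv⟩
      ⟨lt_of_lt_of_le hc ht.1, lt_of_le_of_lt ht.2 hv⟩ ht.1
    simp only at h
    linarith
  have hint : IntervalIntegrable g MeasureTheory.volume c v := g_intble hc hv hcv
  have hlin : IntervalIntegrable (fun t => (g c + (7/20)*c) + (-(7/20))*t)
      MeasureTheory.volume c v :=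
    by apply Continuous.intervalIntegrable; fun_prop
  have h := intervalIntegral.integral_mono_on hcv hlin hint hpt
  rw [lin_integral] at h
  nlinarith [h]

lemma chunk_left {u c : ℝ} (hu : 0 < u) (huc : u ≤ c) (hc : c < π) :
    g c * (c - u) - (7/20)*(c-u)^2/2 ≤ ∫ t in u..c, g t := by
  have hpt : ∀ t ∈ Set.Icc u c, (g c - (7/20)*c) + (7/20)*t ≤ g t := by
    intro t ht
    have h := mono_sub ⟨lt_of_lt_of_le hu ht.1, lt_of_le_of_lt ht.2 hc⟩
      ⟨hu.trans_le huc, hc⟩ ht.2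
    simp only at h
    linarith
  have hint : IntervalIntegrable g MeasureTheory.volume u c := g_intble hu hc huc
  have hlin : IntervalIntegrable (fun t => (g c - (7/20)*c) + (7/20)*t)
      MeasureTheory.volume u c :=
    by apply Continuous.intervalIntegrable; fun_prop
  have h := intervalIntegral.integral_mono_on huc hlin hint hpt
  rw [lin_integral] at h
  nlinarith [h]

lemma chunk {u c v : ℝ} (hu : 0 < u) (huc : u ≤ c) (hcv : c ≤ v) (hv : v < π) :
    g c * (v - u) - (7/20)*((c-u)^2 + (v-c)^2)/2 ≤ ∫ t in u..v, g t := by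
  have h1 := chunk_left hu huc (lt_of_le_of_lt hcv hv)
  have h2 := chunk_right (hu.trans_le huc) hcv hv
  have h3 := intervalIntegral.integral_add_adjacent_intervals
    (g_intble hu (lt_of_le_of_lt hcv hv) huc) (g_intble (hu.trans_le huc) hv hcv)
  rw [← h3]
  nlinarith


lemma sum_g_le (n : ℕ) (hn : 2 ≤ n) :
    (π/n) * ∑ l ∈ Ico 1 n, g (π * l / n)
      ≤ (∫ t in (π/(2*(n:ℝ)))..(π - π/(2*(n:ℝ))), g t) + ((n:ℝ)-1) * ((7/20) * (π/n)^2/4) := by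
  have hπ := Real.pi_pos
  have hN : (0:ℝ) < n := by positivity
  set δ : ℝ := π/n with hδ
  have hδpos : 0 < δ := by positivity
  have hnδ : (n:ℝ) * δ = π := by rw [hδ]; field_simp
  set a : ℕ → ℝ := fun k => ((k:ℝ) - 1/2) * δ with ha
  have hsum : ∑ k ∈ Ico 1 n, ∫ t in (a k)..(a (k+1)), g t = ∫ t in (a 1)..(a n), g t := by
    apply intervalIntegral.sum_integral_adjacent_intervals_Ico (by omega)
    intro k hk
    simp only [Set.mem_Ico] at hk
    apply g_intble
    · have : (1:ℝ) ≤ (k:ℝ) := by exact_mod_cast hk.1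
      simp only [ha]; nlinarith [hnδ, hδpos]
    · have : (k:ℝ) + 1 ≤ (n:ℝ) := by exact_mod_cast hk.2
      simp only [ha]; push_cast; nlinarith [hnδ, hδpos]
    · simp only [ha]; push_cast; nlinarith [hnδ, hδpos]
  have heach : ∀ k ∈ Ico 1 n,
      g (π * k / n) * δ - (7/20) * δ^2/4 ≤ ∫ t in (a k)..(a (k+1)), g t := by
    intro k hk
    simp only [mem_Ico] at hk
    have hk1 : (1:ℝ) ≤ (k:ℝ) := by exact_mod_cast hk.1
    have hkn : (k:ℝ) + 1 ≤ (n:ℝ) := by exact_mod_cast hk.2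
    have hc : π * k / n = (k:ℝ) * δ := by rw [hδ]; ring
    have h := chunk (u := a k) (c := (k:ℝ)*δ) (v := a (k+1))
      (by simp only [ha]; nlinarith [hnδ, hδpos])
      (by simp only [ha]; nlinarith [hnδ, hδpos])
      (by simp only [ha]; push_cast; nlinarith [hnδ, hδpos])
      (by simp only [ha]; push_cast; nlinarith [hnδ, hδpos])
    rw [hc]
    have e1 : (k:ℝ)*δ - a k = δ/2 := by simp only [ha]; ring
    have e2 : a (k+1) - (k:ℝ)*δ = δ/2 := by simp only [ha]; push_cast; ring
    have e3 : a (k+1) - a k = δ := by simp only [ha]; push_cast; ring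
    rw [e1, e2, e3] at h
    have e4 : 7/20*((δ/2)^2+(δ/2)^2)/2 = 7/20*δ^2/4 := by ring
    linarith
  have hsum2 := Finset.sum_le_sum heach
  rw [hsum] at hsum2
  have hcard : (Ico 1 n).card = n - 1 := by simp
  rw [Finset.sum_sub_distrib, Finset.sum_const, hcard, ← Finset.sum_mul] at hsum2
  have hend1 : a 1 = π/(2*(n:ℝ)) := by simp only [ha]; push_cast; rw [hδ]; field_simp [hN.ne']; ring
  have hend2 : a n = π - π/(2*(n:ℝ)) := by simp only [ha]; rw [hδ]; field_simp [hN.ne']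
  rw [hend1, hend2] at hsum2
  have hcast : ((n - 1 : ℕ) : ℝ) = (n:ℝ) - 1 := by
    have : 1 ≤ n := by omega
    push_cast [this]; ring
  have := hsum2
  simp only [nsmul_eq_mul, hcast] at this
  nlinarith [this]


lemma G_hasDeriv {t : ℝ} (h1 : 0 < t) (h2 : t < π) :
    HasDerivAt (fun t => Real.log (Real.tan (t/2)) - Real.log t + Real.log (π - t)) (g t) t := by
  have hc2 : 0 < cos (t/2) := Real.cos_pos_of_mem_Ioo ⟨by linarith, by linarith⟩
  have hs2 : 0 < sin (t/2) := Real.sin_pos_of_pos_of_lt_pi (by linarith) (by nlinarith [Real.pi_pos])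
  have htan : 0 < tan (t/2) := Real.tan_pos_of_pos_of_lt_pi_div_two (by linarith) (by linarith)
  have hπt : π - t ≠ 0 := sub_ne_zero.mpr h2.ne'
  have d1 : HasDerivAt (fun t : ℝ => Real.tan (t/2)) (1 / cos (t/2)^2 * (1/2)) t :=
    (Real.hasDerivAt_tan hc2.ne').comp (h := fun x : ℝ => x / 2) t ((hasDerivAt_id' t).div_const 2)
  have d1log : HasDerivAt (fun t : ℝ => Real.log (Real.tan (t/2)))
      ((1 / cos (t/2)^2 * (1/2)) / tan (t/2)) t := d1.log htan.ne'
  have d2 : HasDerivAt Real.log t⁻¹ t := Real.hasDerivAt_log h1.ne'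
  have d3 : HasDerivAt (fun t : ℝ => Real.log (π - t)) ((π - t)⁻¹ * (0 - 1)) t :=
    (Real.hasDerivAt_log hπt).comp t ((hasDerivAt_const t π).sub (hasDerivAt_id t))
  have h := (d1log.sub d2).add d3
  apply h.congr_deriv
  have hsin : Real.sin t = 2 * sin (t/2) * cos (t/2) := by
    rw [← Real.sin_two_mul]
    congr 1
    ring
  unfold g
  rw [hsin, Real.tan_eq_sin_div_cos]
  field_simp
  ring

lemma integral_g_eq {a : ℝ} (h1 : 0 < a) (h2 : a ≤ π/2) :
    ∫ t in a..(π - a), g t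
      = 2*Real.log a - 2*Real.log (Real.tan (a/2)) - 2*Real.log (π - a) := by
  have hπ := Real.pi_pos
  have hle : a ≤ π - a := by linarith
  have hftc := intervalIntegral.integral_eq_sub_of_hasDerivAt
    (f := fun t => Real.log (Real.tan (t/2)) - Real.log t + Real.log (π - t)) (f' := g)
    (a := a) (b := π - a) ?_ (g_intble h1 (by linarith) hle)
  · rw [hftc]
    have e1 : Real.tan ((π - a)/2) = (Real.tan (a/2))⁻¹ := by
      rw [show (π - a)/2 = π/2 - a/2 by ring, Real.tan_pi_div_two_sub]
    rw [e1, Real.log_inv, show π - (π - a) = a by ring]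
    ring
  · intro t ht
    rw [Set.uIcc_of_le hle] at ht
    exact G_hasDeriv (lt_of_lt_of_le h1 ht.1) (lt_of_le_of_lt ht.2 (by linarith))


lemma harm_lt (n : ℕ) (hn : 2 ≤ n) :
    ∑ l ∈ Ico 1 n, ((l:ℝ))⁻¹ < Real.log n + Real.eulerMascheroniConstant := by
  have h := Real.eulerMascheroniSeq_lt_eulerMascheroniConstant (n-1)
  unfold Real.eulerMascheroniSeq at h
  have hcast : ((n-1 : ℕ) : ℝ) + 1 = (n:ℝ) := by
    have h1 : 1 ≤ n := by omega
    push_cast [h1]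
    ring
  rw [hcast] at h
  have hsum : ((harmonic (n-1) : ℚ) : ℝ) = ∑ l ∈ Ico 1 n, ((l:ℝ))⁻¹ := by
    rw [Finset.sum_Ico_eq_sum_range]
    unfold harmonic
    push_cast
    apply Finset.sum_congr rfl
    intro i _
    push_cast
    ring_nf
  rw [hsum] at h
  linarith

lemma reflect_sum (n : ℕ) (hn : 2 ≤ n) :
    ∑ l ∈ Ico 1 n, (π - π*(l:ℝ)/n)⁻¹ = ∑ l ∈ Ico 1 n, (π*(l:ℝ)/n)⁻¹ := by
  have hN0 : ((n:ℝ)) ≠ 0 := by positivity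
  have h := Finset.sum_Ico_reflect (fun k : ℕ => (π*(k:ℝ)/n)⁻¹) 1 (show n ≤ n + 1 by omega)
  simp only [Nat.add_sub_cancel_left, Nat.add_sub_cancel] at h
  rw [← h]
  apply Finset.sum_congr rfl
  intro l hl
  simp only [mem_Ico] at hl
  have hln : l ≤ n := by omega
  have hc : ((n - l : ℕ) : ℝ) = (n:ℝ) - (l:ℝ) := by push_cast [hln]; ring
  rw [hc]
  congr 1
  field_simp

lemma log_one_sub_ge {u : ℝ} (h0 : 0 ≤ u) (h1 : u < 1) : -(u/(1-u)) ≤ Real.log (1-u) := by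
  have hne : (1:ℝ) - u ≠ 0 := by linarith
  have h := Real.log_le_sub_one_of_pos (show 0 < (1-u)⁻¹ by
    apply inv_pos.mpr; linarith)
  rw [Real.log_inv] at h
  have e : (1-u)⁻¹ - 1 = u/(1-u) := by
    field_simp
    ring
  linarith

lemma final_num (N : ℝ) (hN : 2 ≤ N) :
    (2*N/π) * ((2*N-1)⁻¹) + (7/20)*π*(N-1)/(4*N) ≤ 1 - 1/π := by
  have hπ := Real.pi_gt_d6
  have hπ' := Real.pi_lt_d6
  have hπ2 : 9.8696 < π^2 := by nlinarith
  have hπ2' : π^2 < 9.8697 := by nlinarith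
  have h1 : (0:ℝ) < 2*N - 1 := by linarith
  have hN0 : (0:ℝ) < N := by linarith
  have hπ0 : (0:ℝ) < π := by linarith
  rw [← sub_nonneg]
  have e : 1 - 1/π - ((2*N/π) * ((2*N-1)⁻¹) + (7/20)*π*(N-1)/(4*N))
      = (80*π*N*(2*N-1) - 80*N*(2*N-1) - 160*N^2 - 7*π^2*(N-1)*(2*N-1))
        / (80*π*N*(2*N-1)) := by
    field_simp
    ring
  rw [e]
  apply div_nonneg _ (by positivity)
  have hc2 : (44:ℝ) ≤ 160*π - 320 - 14*π^2 := by nlinarith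
  have hc1 : (35:ℝ) ≤ 21*π^2 - 80*π + 80 := by nlinarith
  have hsq : 4 ≤ N^2 := by nlinarith
  nlinarith [mul_le_mul_of_nonneg_left hc2 (le_of_lt (by positivity : (0:ℝ) < N^2)),
    mul_le_mul_of_nonneg_left hc1 hN0.le]


end CscBound

open CscBound in
theorem csc_sum_upper_bound (n : ℕ) (hn : 2 ≤ n) :
    ∑ l ∈ Finset.Ico 1 n, (Real.sin (π * l / n))⁻¹ <
      (2 * n / π) * (Real.log (2 * n / π) + Real.eulerMascheroniConstant) + 1 - 1 / π := by
  have hπ := Real.pi_gt_d6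
  have hπ' := Real.pi_lt_d6
  have hπ0 : 0 < π := by linarith
  have hN : (2:ℝ) ≤ (n:ℝ) := by exact_mod_cast hn
  have hN0 : (0:ℝ) < n := by linarith
  set a : ℝ := π/(2*(n:ℝ)) with ha
  have ha1 : 0 < a := by rw [ha]; positivity
  have ha2 : a ≤ π/2 := by
    rw [ha]
    apply div_le_div_of_nonneg_left hπ0.le (by norm_num) (by linarith)
  -- split the sum
  have hsplit : ∑ l ∈ Ico 1 n, (Real.sin (π*l/n))⁻¹
      = ∑ l ∈ Ico 1 n, (π*(l:ℝ)/n)⁻¹ + ∑ l ∈ Ico 1 n, (π - π*(l:ℝ)/n)⁻¹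
        + ∑ l ∈ Ico 1 n, g (π*l/n) := by
    rw [← Finset.sum_add_distrib, ← Finset.sum_add_distrib]
    apply Finset.sum_congr rfl
    intro l hl
    unfold g
    ring
  have hharm2 : ∑ l ∈ Ico 1 n, (π*(l:ℝ)/n)⁻¹ = ((n:ℝ)/π) * ∑ l ∈ Ico 1 n, ((l:ℝ))⁻¹ := by
    rw [Finset.mul_sum]
    apply Finset.sum_congr rfl
    intro l hl
    simp only [mem_Ico] at hl
    have hl1 : (1:ℝ) ≤ (l:ℝ) := by exact_mod_cast hl.1
    rw [eq_comm]
    field_simp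
  -- harmonic bound
  have hH := harm_lt n hn
  -- sum of g bound
  have hSgraw := sum_g_le n hn
  -- integral bound
  have hint_le : (∫ t in a..(π - a), g t)
      ≤ 2*Real.log 2 - 2*Real.log π + 2*((2*(n:ℝ)-1)⁻¹) := by
    rw [integral_g_eq ha1 ha2]
    have htb : Real.log a - Real.log 2 ≤ Real.log (Real.tan (a/2)) := by
      have ht := tan_ge (a/2) (by linarith) (by linarith)
      have e2 : Real.log (a/2) = Real.log a - Real.log 2 :=
        Real.log_div ha1.ne' two_ne_zero
      calc Real.log a - Real.log 2 = Real.log (a/2) := e2.symm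
        _ ≤ Real.log (Real.tan (a/2)) := by
            apply Real.log_le_log (by positivity)
            nlinarith [ht, (by positivity : (0:ℝ) ≤ (a/2)^3/3)]
    have hpb : Real.log π - (2*(n:ℝ)-1)⁻¹ ≤ Real.log (π - a) := by
      have hu1 : (1:ℝ)/(2*(n:ℝ)) < 1 := by
        rw [div_lt_one (by linarith)]; linarith
      have hu0 : (0:ℝ) ≤ 1/(2*(n:ℝ)) := by positivity
      have e3 : π - a = π * (1 - 1/(2*(n:ℝ))) := by
        rw [ha]; field_simp
      have e4 : Real.log (π * (1 - 1/(2*(n:ℝ))))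
          = Real.log π + Real.log (1 - 1/(2*(n:ℝ))) :=
        Real.log_mul hπ0.ne' (by nlinarith)
      have h5 := log_one_sub_ge hu0 hu1
      have e6 : (1/(2*(n:ℝ)))/(1 - 1/(2*(n:ℝ))) = (2*(n:ℝ)-1)⁻¹ := by
        rw [eq_comm]
        field_simp
      rw [e3, e4]
      rw [e6] at h5
      linarith
    linarith
  -- combine Σg
  have hSg : ∑ l ∈ Ico 1 n, g (π*l/n)
      ≤ ((n:ℝ)/π) * (2*Real.log 2 - 2*Real.log π + 2*((2*(n:ℝ)-1)⁻¹))
        + (7/20)*π*((n:ℝ)-1)/(4*(n:ℝ)) := by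
    rw [← ha] at hSgraw
    have hstep : (∫ t in a..(π - a), g t) + ((n:ℝ)-1) * ((7/20) * (π/(n:ℝ))^2/4)
        ≤ (2*Real.log 2 - 2*Real.log π + 2*((2*(n:ℝ)-1)⁻¹))
          + ((n:ℝ)-1) * ((7/20) * (π/(n:ℝ))^2/4) := by linarith [hint_le]
    have hmul := mul_le_mul_of_nonneg_left (hSgraw.trans hstep)
      (by positivity : (0:ℝ) ≤ (n:ℝ)/π)
    have e7 : ((n:ℝ)/π) * ((π/(n:ℝ)) * ∑ l ∈ Ico 1 n, g (π*l/n))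
        = ∑ l ∈ Ico 1 n, g (π*l/n) := by
      field_simp
    rw [e7] at hmul
    have e8 : ((n:ℝ)/π) * (((n:ℝ)-1) * ((7/20) * (π/(n:ℝ))^2/4))
        = (7/20)*π*((n:ℝ)-1)/(4*(n:ℝ)) := by
      field_simp
    calc ∑ l ∈ Ico 1 n, g (π*l/n)
        ≤ ((n:ℝ)/π) * ((2*Real.log 2 - 2*Real.log π + 2*((2*(n:ℝ)-1)⁻¹))
            + ((n:ℝ)-1) * ((7/20) * (π/(n:ℝ))^2/4)) := hmul
      _ = ((n:ℝ)/π) * (2*Real.log 2 - 2*Real.log π + 2*((2*(n:ℝ)-1)⁻¹))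
            + (7/20)*π*((n:ℝ)-1)/(4*(n:ℝ)) := by rw [mul_add, e8]
  -- log identity
  have hlogid : Real.log (2*(n:ℝ)/π) = Real.log 2 + Real.log (n:ℝ) - Real.log π := by
    rw [Real.log_div (by positivity) hπ0.ne', Real.log_mul two_ne_zero (by positivity)]
  -- final assembly
  have hfin := final_num (n:ℝ) hN
  rw [hsplit, reflect_sum n hn, hharm2]
  have hcoef : (0:ℝ) < (n:ℝ)/π := by positivity
  have hmulH := mul_lt_mul_of_pos_left hH hcoef
  have hmulid : 2 * (n:ℝ) / π * (Real.log (2*(n:ℝ)/π) + Real.eulerMascheroniConstant)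
      = 2*((n:ℝ)/π)*(Real.log 2 + Real.log (n:ℝ) - Real.log π)
        + 2*((n:ℝ)/π)*Real.eulerMascheroniConstant := by
    rw [hlogid]; ring
  rw [hmulid]
  have r1 : (n:ℝ)/π*(Real.log (n:ℝ) + Real.eulerMascheroniConstant)
      = (n:ℝ)/π*Real.log (n:ℝ) + (n:ℝ)/π*Real.eulerMascheroniConstant := by ring
  have r2 : (n:ℝ)/π * (2*Real.log 2 - 2*Real.log π + 2*((2*(n:ℝ)-1)⁻¹))
      = 2*((n:ℝ)/π)*Real.log 2 - 2*((n:ℝ)/π)*Real.log π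
        + 2*((n:ℝ)/π)*((2*(n:ℝ)-1)⁻¹) := by ring
  have r3 : 2*(n:ℝ)/π*((2*(n:ℝ)-1)⁻¹) = 2*((n:ℝ)/π)*((2*(n:ℝ)-1)⁻¹) := by ring
  have r4 : 2*((n:ℝ)/π)*(Real.log 2 + Real.log (n:ℝ) - Real.log π)
      = 2*((n:ℝ)/π)*Real.log 2 + 2*((n:ℝ)/π)*Real.log (n:ℝ)
        - 2*((n:ℝ)/π)*Real.log π := by ring
  linarith [hmulH, hSg, hfin, r1, r2, r3, r4]
end
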